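/- Let G be a Lie group with closed subgroup H, and suppose G, H, and Z = G/H carry compatible invariant measures (so that Weil's integration formula holds). Let U ⊆ G and D ⊆ H be open sets, and let z₀ = eH be the base point. Then vol_Z(U·z₀) · vol_H(D) ≤ vol_G(U·D), where U·D = {ud : u ∈ U, d ∈ D} ⊆ G. -/

import Mathlib

open MeasureTheory
open scoped Pointwise

/-- Let `G` be a (unimodular) group with closed subgroup `H`, and suppose `G`, `H` and
`Z = G / H` carry compatible invariant measures, in the sense that Weil's integration formula
`∫_G f = ∫_Z ∫_H f(g h) dμ_H(h) dμ_Z(gH)` holds (with a measurable choice of section given by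
`Quotient.out`).  Then for open sets `U ⊆ G` and `D ⊆ H`,
`vol_Z (U · z₀) * vol_H (D) ≤ vol_G (U · D)`. -/
theorem quotient_volume_mul_le
    {G : Type*} [Group G] [TopologicalSpace G] [IsTopologicalGroup G]
    [MeasurableSpace G] [BorelSpace G]
    (H : Subgroup G)
    (μG : Measure G) (μH : Measure (H : Subgroup G)) (μZ : Measure (G ⧸ H))
    -- invariance of the measures
    (hGinv : ∀ g : G, MeasurePreserving (fun x : G => g * x) μG μG)
    (hHinv : ∀ h : H, MeasurePreserving (fun x : H => h * x) μH μH)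
    (hZinv : ∀ g : G, MeasurePreserving (fun z : G ⧸ H => g • z) μZ μZ)
    -- Weil's integration formula
    (hWeil : ∀ f : G → ENNReal, Measurable f →
      ∫⁻ g, f g ∂μG =
        ∫⁻ z, (∫⁻ h : H, f ((Quotient.out z : G) * (h : G)) ∂μH) ∂μZ)
    (U : Set G) (hU : IsOpen U) (D : Set H) (hD : IsOpen D) :
    μZ (QuotientGroup.mk '' U) * μH D ≤ μG (U * (Subtype.val '' D)) := by
  classical
  set S : Set G := U * (Subtype.val '' D) with hS
  have hSopen : IsOpen S := hU.mul_right
  have hSm : MeasurableSet S := hSopen.measurableSet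
  -- D is measurable as the preimage of an open set of G
  obtain ⟨V, hVopen, hVD⟩ : ∃ V, IsOpen V ∧ Subtype.val ⁻¹' V = D := by
    rcases isOpen_induced_iff.mp hD with ⟨V, hV, hVD⟩
    exact ⟨V, hV, hVD⟩
  have hDm : MeasurableSet D := hVD ▸ hVopen.measurableSet.preimage measurable_subtype_coe
  -- the image of U in the quotient is measurable
  have hπU : MeasurableSet (QuotientGroup.mk '' U : Set (G ⧸ H)) := by
    rw [measurableSet_quotient]
    have : (Quotient.mk'' ⁻¹' (QuotientGroup.mk '' U : Set (G ⧸ H))) = U * (H : Set G) :=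
      QuotientGroup.preimage_image_mk_eq_mul H U
    rw [this]
    exact (hU.mul_right).measurableSet
  have hf : Measurable (S.indicator (1 : G → ENNReal)) :=
    measurable_one.indicator hSm
  have hWeilS := hWeil _ hf
  have hLHS : ∫⁻ g, S.indicator (1 : G → ENNReal) g ∂μG = μG S := by
    rw [lintegral_indicator hSm]
    simp
  rw [hLHS] at hWeilS
  rw [hS] at hWeilS ⊢
  rw [hWeilS]
  -- pointwise lower bound on the inner integral
  have hpoint : ∀ z ∈ (QuotientGroup.mk '' U : Set (G ⧸ H)),
      μH D ≤ ∫⁻ h : H, S.indicator (1 : G → ENNReal) ((Quotient.out z : G) * (h : G)) ∂μH := by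
    intro z hz
    obtain ⟨u, hu, huz⟩ := hz
    have hout : QuotientGroup.mk (Quotient.out z : G) = z := by
      exact Quotient.out_eq z
    have hmem : u⁻¹ * (Quotient.out z : G) ∈ H := by
      rw [← QuotientGroup.eq]
      rw [huz, hout]
    set h₀ : H := ⟨u⁻¹ * (Quotient.out z : G), hmem⟩ with hh₀
    have hout_eq : (Quotient.out z : G) = u * (h₀ : G) := by
      simp [hh₀, mul_assoc]
    set T : Set H := (fun x : H => h₀ * x) ⁻¹' D with hT
    have hTm : MeasurableSet T := by
      have : T = Subtype.val ⁻¹' ((fun g : G => (h₀ : G) * g) ⁻¹' V) := by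
        ext x
        simp [hT, ← hVD]
      rw [this]
      exact ((hVopen.measurableSet.preimage (measurable_const_mul _)).preimage
        measurable_subtype_coe)
    have hTvol : μH T = μH D := (hHinv h₀).measure_preimage hDm.nullMeasurableSet
    calc μH D = ∫⁻ h : H, T.indicator (1 : H → ENNReal) h ∂μH := by
          rw [lintegral_indicator hTm]; simp [hTvol]
      _ ≤ ∫⁻ h : H, S.indicator (1 : G → ENNReal) ((Quotient.out z : G) * (h : G)) ∂μH := by
          refine lintegral_mono fun h => ?_
          by_cases hh : h ∈ T
          · have hmemS : (Quotient.out z : G) * (h : G) ∈ S := by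
              rw [hout_eq, mul_assoc]
              exact Set.mul_mem_mul hu ⟨h₀ * h, hh, rfl⟩
            simp [Set.indicator_of_mem hh, Set.indicator_of_mem hmemS]
          · simp [Set.indicator_of_notMem hh]
  calc μZ (QuotientGroup.mk '' U) * μH D
      = ∫⁻ z, (QuotientGroup.mk '' U : Set (G ⧸ H)).indicator (fun _ => μH D) z ∂μZ := by
        rw [lintegral_indicator hπU]; simp [mul_comm]
    _ ≤ ∫⁻ z, (∫⁻ h : H, S.indicator (1 : G → ENNReal) ((Quotient.out z : G) * (h : G)) ∂μH) ∂μZ := by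
        refine lintegral_mono fun z => ?_
        by_cases hz : z ∈ (QuotientGroup.mk '' U : Set (G ⧸ H))
        · rw [Set.indicator_of_mem hz]; exact hpoint z hz
        · simp [Set.indicator_of_notMem hz]
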